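/- Given a 3-CNF formula ψ, construct graphs G_x and G_c as follows. G_x has a vertex (cluster) C(x) for each variable x and a vertex C(γ) for each clause γ, with C(γ) adjacent to the clusters of the three variables occurring in γ. In G_c, each variable cluster C(x) contains two cells (for literals x and ¬x), each clause cluster C(γ) contains three cells (one per literal of γ); each literal cell of a clause γ is adjacent to the corresponding literal cell of its variable's cluster and to all cells of the clusters of the other two variables of γ. Then ψ is satisfiable if and only if there exists a choice of exactly one cell from each cluster such that the subgraph of G_c induced by the chosen cells is isomorphic to G_x (via the map sending each chosen cell to its cluster). -/
import Mathlib


/-- A 3-clause over variables `Var`: three literals over pairwise distinct variables.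
`var i` is the variable of the `i`-th literal and `pos i` its sign (`true` for a
positive literal). -/
structure ThreeClause (Var : Type*) where
  var : Fin 3 → Var
  pos : Fin 3 → Bool
  inj : Function.Injective var

/-- A truth assignment satisfies a clause if some literal evaluates to true. -/
def ThreeClause.Sat {Var : Type*} (γ : ThreeClause Var) (τ : Var → Bool) : Prop :=
  ∃ i : Fin 3, τ (γ.var i) = γ.pos i

section
variable {Var : Type*} {m : ℕ} (ψ : Fin m → ThreeClause Var)

/-- Clusters: one per variable, one per clause. -/
abbrev Cluster (Var : Type*) (m : ℕ) := Var ⊕ Fin m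

/-- Cells: each variable cluster contains two cells (one per sign of the literal),
each clause cluster contains three cells (one per literal of the clause). -/
abbrev Cell (Var : Type*) (m : ℕ) := (Var × Bool) ⊕ (Fin m × Fin 3)

/-- The cluster containing a given cell. -/
def clusterOf : Cell Var m → Cluster Var m
  | Sum.inl (x, _) => Sum.inl x
  | Sum.inr (j, _) => Sum.inr j

/-- The intersection graph `G_x`: a clause cluster is adjacent to the clusters of the
three variables occurring in the clause. -/
def adjX : Cluster Var m → Cluster Var m → Prop
  | Sum.inl x, Sum.inr j => ∃ i : Fin 3, (ψ j).var i = x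
  | Sum.inr j, Sum.inl x => ∃ i : Fin 3, (ψ j).var i = x
  | _, _ => False

/-- The cell graph `G_c`: the literal cell `(j, i)` of clause `γ = ψ j` is adjacent to
the corresponding literal cell of the cluster of its variable `γ.var i`, and to all
(i.e., both) cells of the clusters of the other two variables of `γ`. There are no
other edges. -/
def adjC : Cell Var m → Cell Var m → Prop
  | Sum.inr (j, i), Sum.inl (x, b) =>
      ((ψ j).var i = x ∧ b = (ψ j).pos i) ∨ (∃ i' : Fin 3, i' ≠ i ∧ (ψ j).var i' = x)
  | Sum.inl (x, b), Sum.inr (j, i) =>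
      ((ψ j).var i = x ∧ b = (ψ j).pos i) ∨ (∃ i' : Fin 3, i' ≠ i ∧ (ψ j).var i' = x)
  | _, _ => False

/-- A 3-CNF formula `ψ` is satisfiable if and only if one can choose exactly one cell
from each cluster such that the chosen cells of any two clusters adjacent in `G_x`
are adjacent in `G_c` (i.e., the subgraph of `G_c` induced by the chosen cells is
isomorphic to `G_x` via the cell-to-cluster map). -/
theorem threeSat_iff_skeleton :
    (∃ τ : Var → Bool, ∀ j : Fin m, (ψ j).Sat τ) ↔
    (∃ s : Cluster Var m → Cell Var m,
      (∀ k, clusterOf (s k) = k) ∧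
      (∀ k k', adjX ψ k k' → adjC ψ (s k) (s k'))) := by
  constructor
  · rintro ⟨τ, hτ⟩
    choose f hf using hτ
    refine ⟨fun k => match k with
      | Sum.inl x => Sum.inl (x, τ x)
      | Sum.inr j => Sum.inr (j, f j), ?_, ?_⟩
    · rintro (x | j) <;> rfl
    · rintro (x | j) (x' | j') h <;> simp only [adjX] at h
      · obtain ⟨i, hi⟩ := h
        simp only [adjC]
        rcases eq_or_ne i (f j') with rfl | hne
        · exact Or.inl ⟨hi, by rw [← hi]; exact hf j'⟩
        · exact Or.inr ⟨i, hne, hi⟩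
      · obtain ⟨i, hi⟩ := h
        simp only [adjC]
        rcases eq_or_ne i (f j) with rfl | hne
        · exact Or.inl ⟨hi, by rw [← hi]; exact hf j⟩
        · exact Or.inr ⟨i, hne, hi⟩
  · rintro ⟨s, hs, hadj⟩
    have hx : ∀ x : Var, ∃ b : Bool, s (Sum.inl x) = Sum.inl (x, b) := by
      intro x
      have := hs (Sum.inl x)
      rcases h : s (Sum.inl x) with ⟨y, b⟩ | p
      · rw [h] at this; simp only [clusterOf, Sum.inl.injEq] at this
        exact ⟨b, by rw [this]⟩
      · rw [h] at this; simp [clusterOf] at this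
    choose τ hτ using hx
    have hj : ∀ j : Fin m, ∃ i : Fin 3, s (Sum.inr j) = Sum.inr (j, i) := by
      intro j
      have := hs (Sum.inr j)
      rcases h : s (Sum.inr j) with p | ⟨j', i⟩
      · rw [h] at this; simp [clusterOf] at this
      · rw [h] at this; simp only [clusterOf, Sum.inr.injEq] at this
        exact ⟨i, by rw [this]⟩
    choose g hg using hj
    refine ⟨τ, fun j => ⟨g j, ?_⟩⟩
    have h := hadj (Sum.inl ((ψ j).var (g j))) (Sum.inr j) ⟨g j, rfl⟩
    rw [hτ, hg] at h
    simp only [adjC] at h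
    rcases h with ⟨_, hb⟩ | ⟨i', hne, hvar⟩
    · exact hb
    · exact absurd ((ψ j).inj hvar) hne

end
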